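/- Let f : ℝⁿ → ℝ be differentiable at a point x with f(x) ≠ 0 or ∇f(x) ≠ 0, and suppose additionally that at x the Hessian vanishes in the sense that the functions x ↦ ‖∇f(x)‖ and x ↦ f(x) are differentiable at x with ∇‖∇f‖(x) = 0 (as holds when f is locally affine at x). Define f̂(x) = f(x) / (‖∇f(x)‖ + |f(x)|). Then ‖∇f̂(x)‖ = (‖∇f(x)‖ / (‖∇f(x)‖ + |f(x)|))² ≤ 1. -/

import Mathlib

open scoped RealInnerProductSpace

open InnerProductSpace Topology

lemma aux_hasDerivAt_div_abs (k : ℝ) (hk : 0 < k) (t : ℝ) :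
    HasDerivAt (fun s : ℝ => s / (k + |s|)) (k / (k + |t|) ^ 2) t := by
  rcases lt_trichotomy t 0 with ht | ht | ht
  · have h1 : HasDerivAt (fun s : ℝ => s / (k - s)) (k / (k - t) ^ 2) t := by
      have hd : k - t ≠ 0 := by nlinarith
      have := (hasDerivAt_id t).div ((hasDerivAt_id t).const_sub k) hd
      refine this.congr_deriv ?_
      simp only [id]; ring
    have : (fun s : ℝ => s / (k - s)) =ᶠ[𝓝 t] fun s => s / (k + |s|) := by
      filter_upwards [eventually_lt_nhds ht] with s hs
      rw [abs_of_neg hs, sub_eq_add_neg]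
    rw [abs_of_neg ht]
    have := h1.congr_of_eventuallyEq this.symm
    rw [← sub_eq_add_neg]; exact this
  · subst ht
    rw [hasDerivAt_iff_tendsto_slope]
    have heq : (fun s : ℝ => 1 / (k + |s|)) =ᶠ[𝓝[≠] (0:ℝ)] slope (fun s : ℝ => s / (k + |s|)) 0 := by
      filter_upwards [self_mem_nhdsWithin] with s hs
      have hs' : s ≠ 0 := hs
      have hd : k + |s| ≠ 0 := by positivity
      simp only [slope, vsub_eq_sub, sub_zero, zero_div, smul_eq_mul]
      field_simp
    have hcont : Filter.Tendsto (fun s : ℝ => 1 / (k + |s|)) (𝓝[≠] (0:ℝ)) (𝓝 (k / (k + |(0:ℝ)|) ^ 2)) := by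
      have : Filter.Tendsto (fun s : ℝ => 1 / (k + |s|)) (𝓝 (0:ℝ)) (𝓝 (1 / (k + |(0:ℝ)|))) := by
        apply Filter.Tendsto.div tendsto_const_nhds
        · exact (continuous_const.add (continuous_abs)).tendsto 0
        · simp; positivity
      have h2 : (1 : ℝ) / (k + |(0:ℝ)|) = k / (k + |(0:ℝ)|) ^ 2 := by
        simp; field_simp
      rw [← h2]
      exact this.mono_left nhdsWithin_le_nhds
    exact hcont.congr' heq
  · have h1 : HasDerivAt (fun s : ℝ => s / (k + s)) (k / (k + t) ^ 2) t := by
      have hd : k + t ≠ 0 := by nlinarith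
      have := (hasDerivAt_id t).div ((hasDerivAt_id t).const_add k) hd
      refine this.congr_deriv ?_
      simp only [id]; ring
    have : (fun s : ℝ => s / (k + s)) =ᶠ[𝓝 t] fun s => s / (k + |s|) := by
      filter_upwards [eventually_gt_nhds ht] with s hs
      rw [abs_of_pos hs]
    rw [abs_of_pos ht]
    exact h1.congr_of_eventuallyEq this.symm

lemma aux_hasGradientAt_affine {n : ℕ} (a : EuclideanSpace ℝ (Fin n)) (c : ℝ)
    (y : EuclideanSpace ℝ (Fin n)) :
    HasGradientAt (fun z => ⟪a, z⟫ + c) a y := by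
  rw [hasGradientAt_iff_hasFDerivAt]
  have : HasFDerivAt (fun z => (toDual ℝ (EuclideanSpace ℝ (Fin n)) a) z + c)
      (toDual ℝ (EuclideanSpace ℝ (Fin n)) a : EuclideanSpace ℝ (Fin n) →L[ℝ] ℝ) y :=
    ((toDual ℝ (EuclideanSpace ℝ (Fin n)) a : EuclideanSpace ℝ (Fin n) →L[ℝ] ℝ).hasFDerivAt).add_const c
  simpa [InnerProductSpace.toDual_apply_apply] using this

theorem gradient_normalization_norm_bounded
    (n : ℕ) (f : EuclideanSpace ℝ (Fin n) → ℝ)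
    (x a : EuclideanSpace ℝ (Fin n)) (c : ℝ)
    (hloc : ∀ᶠ y in nhds x, f y = ⟪a, y⟫ + c)
    (ha : a ≠ 0 ∨ c ≠ 0) :
    ‖gradient (fun y => f y / (‖gradient f y‖ + |f y|)) x‖
      = (‖gradient f x‖ / (‖gradient f x‖ + |f x|)) ^ 2 ∧
    (‖gradient f x‖ / (‖gradient f x‖ + |f x|)) ^ 2 ≤ 1 := by
  set g : EuclideanSpace ℝ (Fin n) → ℝ := fun y => ⟪a, y⟫ + c with hg
  rcases mem_nhds_iff.1 hloc with ⟨U, hUsub, hUo, hxU⟩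
  have hgradU : ∀ y ∈ U, gradient f y = a := by
    intro y hy
    have hfg : f =ᶠ[𝓝 y] g := Filter.eventually_iff_exists_mem.2 ⟨U, hUo.mem_nhds hy, hUsub⟩
    rw [hfg.gradient_eq, (aux_hasGradientAt_affine a c y).gradient]
  have hgradx : gradient f x = a := hgradU x hxU
  have hfx : f x = g x := hloc.self_of_nhds
  have heq : (fun y => f y / (‖gradient f y‖ + |f y|)) =ᶠ[𝓝 x]
      (fun y => g y / (‖a‖ + |g y|)) := by
    filter_upwards [hUo.mem_nhds hxU] with y hy
    rw [hgradU y hy, hUsub hy]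
  have hdenpos : 0 < ‖a‖ + |f x| := by
    rcases ha with h | h
    · have : 0 < ‖a‖ := norm_pos_iff.2 h
      positivity
    · rcases eq_or_ne a 0 with rfl | h'
      · have : f x = c := by rw [hfx]; simp [hg]
        rw [this]
        simpa using abs_pos.2 h
      · have : 0 < ‖a‖ := norm_pos_iff.2 h'
        positivity
  have hle : (‖gradient f x‖ / (‖gradient f x‖ + |f x|)) ^ 2 ≤ 1 := by
    rw [hgradx]
    have h1 : ‖a‖ / (‖a‖ + |f x|) ≤ 1 := by
      rw [div_le_one hdenpos]
      simp [abs_nonneg]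
    exact pow_le_one₀ (by positivity) h1
  refine ⟨?_, hle⟩
  rcases eq_or_ne a 0 with rfl | hane
  · -- constant case
    have hc : c ≠ 0 := ha.resolve_left (by simp)
    have hfxc : f x = c := by rw [hfx]; simp [hg]
    have hconst : (fun y : EuclideanSpace ℝ (Fin n) => g y / (‖(0 : EuclideanSpace ℝ (Fin n))‖ + |g y|))
        = fun _ => c / |c| := by
      funext y; simp [hg]
    have : gradient (fun y => f y / (‖gradient f y‖ + |f y|)) x = 0 := by
      rw [heq.gradient_eq, hconst, gradient_fun_const]
    rw [this, hgradx, hfxc]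
    simp
  · -- a ≠ 0
    have hk : 0 < ‖a‖ := norm_pos_iff.2 hane
    set k := ‖a‖
    set d := k / (k + |g x|) ^ 2 with hd
    have hderiv : HasDerivAt (fun s : ℝ => s / (k + |s|)) d (g x) :=
      aux_hasDerivAt_div_abs k hk (g x)
    have hgx : HasFDerivAt g (toDual ℝ (EuclideanSpace ℝ (Fin n)) a :
        EuclideanSpace ℝ (Fin n) →L[ℝ] ℝ) x :=
      (aux_hasGradientAt_affine a c x).hasFDerivAt
    have hcomp : HasFDerivAt (fun y => g y / (k + |g y|))
        (d • (toDual ℝ (EuclideanSpace ℝ (Fin n)) a : EuclideanSpace ℝ (Fin n) →L[ℝ] ℝ)) x :=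
      hderiv.comp_hasFDerivAt x hgx
    have hgradcomp : HasGradientAt (fun y => g y / (k + |g y|)) (d • a) x := by
      rw [hasGradientAt_iff_hasFDerivAt]
      have : toDual ℝ (EuclideanSpace ℝ (Fin n)) (d • a)
          = d • (toDual ℝ (EuclideanSpace ℝ (Fin n)) a) := map_smul _ _ _
      rw [this]
      exact hcomp
    have hgrad : gradient (fun y => f y / (‖gradient f y‖ + |f y|)) x = d • a := by
      rw [heq.gradient_eq, hgradcomp.gradient]
    rw [hgrad, hgradx]
    have hdnn : 0 ≤ d := by positivity
    rw [norm_smul, Real.norm_eq_abs, abs_of_nonneg hdnn, hd]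
    have hgxfx : g x = f x := hfx.symm
    rw [hgxfx]
    have hne : k + |f x| ≠ 0 := ne_of_gt hdenpos
    field_simp
    ring
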